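/- Let n ≥ 2, d ≥ 1, and δ > 1. Let P_1, …, P_n be points in ℝ^d such that the Euclidean distance between any two distinct points lies in {1, δ}, and suppose that for some h with 0 ≤ h ≤ n−1 we have ‖P_i − P_n‖ = 1 for 1 ≤ i ≤ h and ‖P_i − P_n‖ = δ for h < i ≤ n−1. Define the (n−1)×(n−1) matrices M and D by M_{ij} = ‖P_i − P_n‖² + ‖P_j − P_n‖² − ‖P_i − P_j‖², and D_{ij} = δ² − 3 if i, j ≤ h, D_{ij} = −(1 + δ²) if exactly one of i, j is ≤ h, and D_{ij} = 1 − 3δ² if i, j > h. Then the matrix S = (2M + D − (1 + δ²)·I)/(δ² − 1) is a Seidel matrix: it is symmetric, has zero diagonal, and all its off-diagonal entries equal 1 or −1. -/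

import Mathlib

/-- The matrix `S = (2M + D - (1+δ²)I)/(δ²-1)` built from the
Cayley–Menger matrix `M` of a two-distance set and the auxiliary block matrix `D`
is a Seidel matrix: symmetric, zero diagonal, off-diagonal entries `±1`. -/
theorem stmt0 (n d : ℕ) (hn : 2 ≤ n) (hd : 1 ≤ d) (δ : ℝ) (hδ : 1 < δ)
    (P : Fin n → EuclideanSpace ℝ (Fin d))
    (hdist : ∀ i j : Fin n, i ≠ j → dist (P i) (P j) = 1 ∨ dist (P i) (P j) = δ)
    (h : ℕ) (hh : h ≤ n - 1)
    (hone : ∀ i : Fin (n - 1), (i : ℕ) < h →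
      dist (P (Fin.castLE (by omega) i)) (P ⟨n - 1, by omega⟩) = 1)
    (hdel : ∀ i : Fin (n - 1), h ≤ (i : ℕ) →
      dist (P (Fin.castLE (by omega) i)) (P ⟨n - 1, by omega⟩) = δ)
    (M D S : Matrix (Fin (n - 1)) (Fin (n - 1)) ℝ)
    (hM : ∀ i j : Fin (n - 1), M i j =
      dist (P (Fin.castLE (by omega) i)) (P ⟨n - 1, by omega⟩) ^ 2 +
      dist (P (Fin.castLE (by omega) j)) (P ⟨n - 1, by omega⟩) ^ 2 -
      dist (P (Fin.castLE (by omega) i)) (P (Fin.castLE (by omega) j)) ^ 2)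
    (hD : ∀ i j : Fin (n - 1), D i j =
      if (i : ℕ) < h ∧ (j : ℕ) < h then δ ^ 2 - 3
      else if (i : ℕ) < h ∨ (j : ℕ) < h then -(1 + δ ^ 2)
      else 1 - 3 * δ ^ 2)
    (hS : S = (δ ^ 2 - 1)⁻¹ •
      ((2 : ℝ) • M + D - (1 + δ ^ 2) • (1 : Matrix (Fin (n - 1)) (Fin (n - 1)) ℝ))) :
    S.IsSymm ∧ (∀ i, S i i = 0) ∧ (∀ i j, i ≠ j → S i j = 1 ∨ S i j = -1) := by
  have hne : δ ^ 2 - 1 ≠ 0 := by nlinarith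
  have hSentry : ∀ i j : Fin (n - 1), S i j =
      (δ ^ 2 - 1)⁻¹ * (2 * M i j + D i j -
        (1 + δ ^ 2) * (if i = j then (1 : ℝ) else 0)) := by
    intro i j
    simp [hS, Matrix.smul_apply, Matrix.add_apply, Matrix.sub_apply, Matrix.one_apply]
  -- abbreviations
  set Q : Fin n := ⟨n - 1, by omega⟩ with hQ
  have hcast : ∀ i : Fin (n - 1), (Fin.castLE (by omega : n - 1 ≤ n) i : Fin n) ≠ Q := by
    intro i hEq
    have := congrArg Fin.val hEq
    simp [hQ] at this
    omega
  have hdQ : ∀ i : Fin (n - 1),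
      dist (P (Fin.castLE (by omega) i)) (P Q) =
        if (i : ℕ) < h then (1 : ℝ) else δ := by
    intro i
    by_cases hi : (i : ℕ) < h
    · simp [hi, hone i hi]
    · simp [hi, hdel i (by omega)]
  have hval : ∀ i j : Fin (n - 1), i ≠ j → S i j = (δ ^ 2 - 1)⁻¹ *
      (1 + δ ^ 2 - 2 * dist (P (Fin.castLE (by omega) i)) (P (Fin.castLE (by omega) j)) ^ 2) := by
    intro i j hij
    rw [hSentry, hM, hD, hdQ, hdQ, if_neg hij]
    by_cases hi : (i : ℕ) < h <;> by_cases hj : (j : ℕ) < h <;>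
      simp only [hi, hj, and_self, true_and, false_and, true_or, or_true, or_false,
        false_or, if_true, if_false] <;> ring
  refine ⟨?_, ?_, ?_⟩
  · rw [Matrix.IsSymm]
    ext i j
    rw [Matrix.transpose_apply]
    rcases eq_or_ne i j with rfl | hne
    · rfl
    · rw [hval _ _ hne.symm, hval _ _ hne,
        dist_comm (P (Fin.castLE (by omega) j))]
  · intro i
    rw [hSentry, hM, hD, hdQ]
    simp only [if_pos rfl, dist_self]
    by_cases hi : (i : ℕ) < h <;> simp only [hi, and_self, or_self, if_true, if_false] <;>
      field_simp <;> ring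
  · intro i j hij
    have hij' : (Fin.castLE (by omega : n - 1 ≤ n) i) ≠ Fin.castLE (by omega) j := by
      intro hEq
      exact hij (Fin.castLE_injective _ hEq)
    rcases hdist _ _ hij' with hc | hc
    · left
      rw [hval _ _ hij, hc]
      field_simp
      ring
    · right
      rw [hval _ _ hij, hc]
      field_simp
      ring
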